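/- Let Ω be a real 3×2 matrix with linearly independent columns, X a real 3×2 matrix, and Δ an invertible real 2×2 matrix. Set 𝓘_Ω = ΩᵀΩ, 𝓘𝓘_Ω = −ΩᵀX, 𝓘 = Δ·𝓘_Ω·Δᵀ and 𝓘𝓘 = Δ·𝓘𝓘_Ω. Then for every b ∈ ℝ²∖{0}, writing a = (Δᵀ)⁻¹·b, one has aᵀ𝓘a ≠ 0, bᵀ𝓘_Ωb ≠ 0, and det(Δ) · (aᵀ·𝓘𝓘·a)/(aᵀ·𝓘·a) = (bᵀ·𝓘𝓘_Ω·adj(Δᵀ)·b)/(bᵀ·𝓘_Ω·b), where adj denotes the adjugate matrix. -/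

import Mathlib

open Matrix

/-- at a nonsingular point, `δ_Ω · 𝒦_q(a) = 𝒦_q^Ω(b)` under the change
of coordinates `a = (Δᵀ)⁻¹ b`. -/
theorem stmt_4 (Ω : Matrix (Fin 3) (Fin 2) ℝ)
    (hΩ : LinearIndependent ℝ (fun j : Fin 2 => fun i : Fin 3 => Ω i j))
    (X : Matrix (Fin 3) (Fin 2) ℝ) (Δ : Matrix (Fin 2) (Fin 2) ℝ)
    (hΔ : IsUnit Δ.det)
    (IΩ IIΩ Im IIm : Matrix (Fin 2) (Fin 2) ℝ)
    (hIΩ : IΩ = Ωᵀ * Ω) (hIIΩ : IIΩ = -(Ωᵀ * X))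
    (hIm : Im = Δ * IΩ * Δᵀ) (hIIm : IIm = Δ * IIΩ)
    (b : Fin 2 → ℝ) (hb : b ≠ 0) (a : Fin 2 → ℝ) (ha : a = (Δᵀ)⁻¹.mulVec b) :
    a ⬝ᵥ Im.mulVec a ≠ 0 ∧ b ⬝ᵥ IΩ.mulVec b ≠ 0 ∧
    Δ.det * ((a ⬝ᵥ IIm.mulVec a) / (a ⬝ᵥ Im.mulVec a)) =
      (b ⬝ᵥ (IIΩ * (Δᵀ).adjugate).mulVec b) / (b ⬝ᵥ IΩ.mulVec b) := by
  have hΔT : IsUnit Δᵀ.det := by rwa [Matrix.det_transpose]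
  -- Δᵀ a = b
  have hba : Δᵀ.mulVec a = b := by
    rw [ha, Matrix.mulVec_mulVec, Matrix.mul_nonsing_inv _ hΔT, Matrix.one_mulVec]
  -- b ⬝ᵥ IΩ b = ‖Ω b‖²
  have hquad : b ⬝ᵥ IΩ.mulVec b = (Ω.mulVec b) ⬝ᵥ (Ω.mulVec b) := by
    rw [hIΩ, ← Matrix.mulVec_mulVec, Matrix.dotProduct_mulVec, Matrix.vecMul_transpose]
  have hΩb : Ω.mulVec b ≠ 0 := by
    intro h
    apply hb
    have := (Fintype.linearIndependent_iff.mp hΩ) b ?_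
    · funext j; exact this j
    · funext i
      have := congrFun h i
      simpa [Matrix.mulVec, dotProduct, mul_comm, Finset.sum_apply] using this
  have hbIΩ : b ⬝ᵥ IΩ.mulVec b ≠ 0 := by
    rw [hquad]
    exact fun h => hΩb (dotProduct_self_eq_zero.mp h)
  have hba' : a ᵥ* Δ = b := by rw [← Matrix.mulVec_transpose]; exact hba
  -- aᵀ Im a = bᵀ IΩ b
  have haIm : a ⬝ᵥ Im.mulVec a = b ⬝ᵥ IΩ.mulVec b := by
    rw [hIm, Matrix.mul_assoc, ← Matrix.mulVec_mulVec, Matrix.dotProduct_mulVec,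
      hba', ← Matrix.mulVec_mulVec, hba]
  -- aᵀ IIm a = bᵀ IIΩ a
  have haIIm : a ⬝ᵥ IIm.mulVec a = b ⬝ᵥ IIΩ.mulVec a := by
    rw [hIIm, ← Matrix.mulVec_mulVec, Matrix.dotProduct_mulVec,
      hba', Matrix.dotProduct_mulVec]
  have hadj : Δ.det * (a ⬝ᵥ IIm.mulVec a) = b ⬝ᵥ (IIΩ * (Δᵀ).adjugate).mulVec b := by
    rw [haIIm, ha, ← Matrix.mulVec_mulVec]
    rw [Matrix.inv_def, Matrix.det_transpose]
    rw [Matrix.smul_mulVec, Matrix.mulVec_smul, dotProduct_smul]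
    rw [Ring.inverse_eq_inv]
    field_simp
    rw [smul_eq_mul, ← mul_assoc, mul_one_div_cancel (IsUnit.ne_zero hΔ), one_mul]
  refine ⟨by rw [haIm]; exact hbIΩ, hbIΩ, ?_⟩
  rw [haIm, mul_div_assoc', hadj]
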